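/- For every subgraph K ∈ S_f, the composite map φ := φ_{e_m} ∘ ⋯ ∘ φ_{e_1} satisfies: φ(K) is an orientation of G admitting a d-flow (so φ maps S_f into O_f) and A(φ(K)) = A(K). -/

import Mathlib

open Finset

section Defs

variable {V : Type*}

/-- Reversal of a directed edge. -/
def drev (e : V × V) : V × V := (e.2, e.1)

/-- `K` is a subgraph of the (symmetric) edge set `E`: it contains either both or
neither of `e` and `drev e` for every `e ∈ E`. -/
def IsSubgraph [DecidableEq V] (E K : Finset (V × V)) : Prop :=
  K ⊆ E ∧ ∀ e ∈ E, (e ∈ K ↔ drev e ∈ K)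

/-- `L` is an orientation of the (symmetric) edge set `E`: it contains exactly one of
`e` and `drev e` for every `e ∈ E`. -/
def IsOrientation [DecidableEq V] (E L : Finset (V × V)) : Prop :=
  L ⊆ E ∧ ∀ e ∈ E, (e ∈ L ↔ drev e ∉ L)

variable [Fintype V] [DecidableEq V]

/-- `f` is a `d`-flow on the directed subgraph `D` of the graph with edge set `E`. -/
def IsFlow (E D : Finset (V × V)) (d : V → ℤ) (f : V × V → ℝ) : Prop :=
  (∀ e ∈ E, 0 ≤ f e ∧ f e ≤ 1) ∧
  (∀ e, e ∉ D → f e = 0) ∧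
  ∀ u : V,
    ((Finset.univ.filter (fun v : V => (u, v) ∈ E)).sum fun v => f (u, v)) -
      ((Finset.univ.filter (fun v : V => (v, u) ∈ E)).sum fun v => f (v, u)) = (d u : ℝ)

/-- A `d`-flow exists on `D`. -/
def AdmitsFlow (E D : Finset (V × V)) (d : V → ℤ) : Prop :=
  ∃ f : V × V → ℝ, IsFlow E D d f

/-- The `w`-cost of a flow `f`. -/
def flowCost (E : Finset (V × V)) (w : V × V → ℝ) (f : V × V → ℝ) : ℝ :=
  ∑ e ∈ E, w e * f e

/-- `f` is a min-cost `d`-flow on `D`. -/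
def IsMinCostFlow (E D : Finset (V × V)) (d : V → ℤ) (w : V × V → ℝ)
    (f : V × V → ℝ) : Prop :=
  IsFlow E D d f ∧ ∀ g : V × V → ℝ, IsFlow E D d g → flowCost E w f ≤ flowCost E w g

/-- The `{0,1}`-valued function determined by a set of edges. -/
def ind (S : Finset (V × V)) : V × V → ℝ := fun e => if e ∈ S then 1 else 0

/-- `A` assigns to every flow-admitting `D ⊆ E` the (edge set of the) unique,
`{0,1}`-valued min-cost `d`-flow on `D`. -/
def GoodA (E : Finset (V × V)) (d : V → ℤ) (w : V × V → ℝ)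
    (A : Finset (V × V) → Finset (V × V)) : Prop :=
  ∀ D : Finset (V × V), D ⊆ E → AdmitsFlow E D d →
    IsMinCostFlow E D d w (ind (A D)) ∧
    ∀ f : V × V → ℝ, IsMinCostFlow E D d w f → f = ind (A D)

/-- `A(D) = A(D')`: both `D` and `D'` admit a `d`-flow and their unique min-cost
`d`-flows coincide.  (If one of them admits no `d`-flow this is false.) -/
def AEq (E : Finset (V × V)) (d : V → ℤ) (A : Finset (V × V) → Finset (V × V))
    (D D' : Finset (V × V)) : Prop :=
  AdmitsFlow E D d ∧ AdmitsFlow E D' d ∧ A D = A D'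

/-- `D ⊕ e := (D ∪ {e}) \ {drev e}`. -/
def oplus (D : Finset (V × V)) (e : V × V) : Finset (V × V) := insert e D \ {drev e}

/-- `D + e := D ∪ {e, drev e}`. -/
def padd (D : Finset (V × V)) (e : V × V) : Finset (V × V) := D ∪ {e, drev e}

/-- `D − e := D \ {e, drev e}`. -/
def psub (D : Finset (V × V)) (e : V × V) : Finset (V × V) := D \ {e, drev e}

/-- The representative of `{e, drev e}` lying in the reference orientation `E'`. -/
def chi (E' : Finset (V × V)) (e : V × V) : V × V := if e ∈ E' then e else drev e

/-- The map `φ_e`. -/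
noncomputable def phiE (E : Finset (V × V)) (d : V → ℤ)
    (A : Finset (V × V) → Finset (V × V)) (E' : Finset (V × V))
    (e : V × V) (D : Finset (V × V)) : Finset (V × V) := by
  classical
  exact
    if ¬ AEq E d A D (oplus D e) then oplus D (drev e)
    else if ¬ AEq E d A D (oplus D (drev e)) then oplus D e
    else if e ∈ D then oplus D (chi E' e) else oplus D (drev (chi E' e))

/-- The map `ψ_e`. -/
noncomputable def psiE (E : Finset (V × V)) (d : V → ℤ)
    (A : Finset (V × V) → Finset (V × V)) (E' : Finset (V × V))
    (e : V × V) (D : Finset (V × V)) : Finset (V × V) := by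
  classical
  exact
    if ¬ AEq E d A D (padd D e) then psub D e
    else if ¬ AEq E d A D (psub D e) then padd D e
    else if chi E' e ∈ D then padd D e else psub D e

end Defs


section Aux
set_option linter.unusedSectionVars false
variable {V : Type*}

@[simp] lemma drev_drev (e : V × V) : drev (drev e) = e := rfl

lemma ne_drev_self {e : V × V} (h : e.1 ≠ e.2) : e ≠ drev e := by
  intro hh
  exact h (congrArg Prod.fst hh)

variable [Fintype V] [DecidableEq V]

lemma ind_inj {S T : Finset (V × V)} (h : ind S = ind T) : S = T := by
  ext x
  have hx := congrFun h x
  simp only [ind] at hx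
  by_cases h1 : x ∈ S <;> by_cases h2 : x ∈ T <;> simp_all

/-- divergence -/
def fdiv (E : Finset (V × V)) (f : V × V → ℝ) (u : V) : ℝ :=
  ((Finset.univ.filter (fun v : V => (u, v) ∈ E)).sum fun v => f (u, v)) -
    ((Finset.univ.filter (fun v : V => (v, u) ∈ E)).sum fun v => f (v, u))

lemma fdiv_comb3 (E : Finset (V × V)) (a b c : ℝ) (f g k : V × V → ℝ) (u : V) :
    fdiv E (fun x => a * f x + b * g x + c * k x) u
      = a * fdiv E f u + b * fdiv E g u + c * fdiv E k u := by
  simp only [fdiv, Finset.sum_add_distrib, ← Finset.mul_sum]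
  ring

lemma fdiv_comb4 (E : Finset (V × V)) (a b c c' : ℝ) (f g k k' : V × V → ℝ) (u : V) :
    fdiv E (fun x => a * f x + b * g x + c * k x + c' * k' x) u
      = a * fdiv E f u + b * fdiv E g u + c * fdiv E k u + c' * fdiv E k' u := by
  simp only [fdiv, Finset.sum_add_distrib, ← Finset.mul_sum]
  ring

lemma cost_comb3 (E : Finset (V × V)) (w : V × V → ℝ) (a b c : ℝ) (f g k : V × V → ℝ) :
    flowCost E w (fun x => a * f x + b * g x + c * k x)
      = a * flowCost E w f + b * flowCost E w g + c * flowCost E w k := by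
  simp only [flowCost, Finset.mul_sum, ← Finset.sum_add_distrib]
  apply Finset.sum_congr rfl
  intro x _
  ring

lemma cost_comb4 (E : Finset (V × V)) (w : V × V → ℝ) (a b c c' : ℝ) (f g k k' : V × V → ℝ) :
    flowCost E w (fun x => a * f x + b * g x + c * k x + c' * k' x)
      = a * flowCost E w f + b * flowCost E w g + c * flowCost E w k + c' * flowCost E w k' := by
  simp only [flowCost, Finset.mul_sum, ← Finset.sum_add_distrib]
  apply Finset.sum_congr rfl
  intro x _
  ring

lemma cost_ind_single (E : Finset (V × V)) (w : V × V → ℝ) {e : V × V} (he : e ∈ E) :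
    flowCost E w (ind {e}) = w e := by
  simp only [flowCost, ind, Finset.mem_singleton, mul_ite, mul_one, mul_zero]
  rw [Finset.sum_ite_eq' E e w]
  simp [he]

lemma sum_ind_out (E : Finset (V × V)) {e : V × V} (he : e ∈ E) (u : V) :
    ((Finset.univ.filter (fun v : V => (u, v) ∈ E)).sum fun v => ind {e} (u, v))
      = if u = e.1 then 1 else 0 := by
  have key : ∀ v : V, ind {e} (u, v) = if u = e.1 ∧ v = e.2 then (1:ℝ) else 0 := by
    intro v
    simp only [ind, Finset.mem_singleton, Prod.ext_iff]
  by_cases h : u = e.1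
  · subst h
    simp only [key, true_and]
    rw [Finset.sum_ite_eq' (Finset.univ.filter (fun v : V => (e.1, v) ∈ E)) e.2
      (fun _ => (1:ℝ))]
    have hm : (e.1, e.2) ∈ E := by simpa using he
    simp [hm]
  · simp only [key, h, false_and, if_false, Finset.sum_const_zero]

lemma sum_ind_in (E : Finset (V × V)) {e : V × V} (he : e ∈ E) (u : V) :
    ((Finset.univ.filter (fun v : V => (v, u) ∈ E)).sum fun v => ind {e} (v, u))
      = if u = e.2 then 1 else 0 := by
  have key : ∀ v : V, ind {e} (v, u) = if u = e.2 ∧ v = e.1 then (1:ℝ) else 0 := by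
    intro v
    simp only [ind, Finset.mem_singleton, Prod.ext_iff]
    by_cases h1 : v = e.1 <;> by_cases h2 : u = e.2 <;> simp [h1, h2]
  by_cases h : u = e.2
  · subst h
    simp only [key, true_and]
    rw [Finset.sum_ite_eq' (Finset.univ.filter (fun v : V => (v, e.2) ∈ E)) e.1
      (fun _ => (1:ℝ))]
    have hm : (e.1, e.2) ∈ E := by simpa using he
    simp [hm]
  · simp only [key, h, false_and, if_false, Finset.sum_const_zero]

lemma fdiv_ind_single (E : Finset (V × V)) {e : V × V} (he : e ∈ E) (u : V) :
    fdiv E (ind {e}) u = (if u = e.1 then 1 else 0) - (if u = e.2 then 1 else 0) := by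
  rw [fdiv, sum_ind_out E he, sum_ind_in E he]

variable {E : Finset (V × V)} {d : V → ℤ} {w : V × V → ℝ}
variable {A : Finset (V × V) → Finset (V × V)}

lemma IsFlow.fdiv_eq {D : Finset (V × V)} {f : V × V → ℝ} (hf : IsFlow E D d f) (u : V) :
    fdiv E f u = d u := hf.2.2 u

lemma isFlow_mono {D D' : Finset (V × V)} (h : D ⊆ D') {f : V × V → ℝ}
    (hf : IsFlow E D d f) : IsFlow E D' d f :=
  ⟨hf.1, fun e he => hf.2.1 e (fun hc => he (h hc)), hf.2.2⟩

lemma mem_of_ind_flow {D S : Finset (V × V)} (hf : IsFlow E D d (ind S)) {x : V × V}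
    (hx : x ∈ S) : x ∈ D := by
  by_contra hc
  have := hf.2.1 x hc
  simp [ind, hx] at this

/-- `oplus` membership lemmas -/
lemma mem_oplus_self {D : Finset (V × V)} {e : V × V} (hne : e ≠ drev e) :
    e ∈ oplus D e := by simp [oplus, hne]

lemma drev_not_mem_oplus {D : Finset (V × V)} {e : V × V} : drev e ∉ oplus D e := by
  simp [oplus]

lemma mem_oplus_iff {D : Finset (V × V)} {e x : V × V} (h1 : x ≠ e) (h2 : x ≠ drev e) :
    x ∈ oplus D e ↔ x ∈ D := by simp [oplus, h1, h2]

lemma oplus_subset {D : Finset (V × V)} {e : V × V} (he : e ∈ E) (hD : D ⊆ E) :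
    oplus D e ⊆ E := by
  intro x hx
  rw [oplus, Finset.mem_sdiff, Finset.mem_insert] at hx
  rcases hx.1 with h | h
  · subst h; exact he
  · exact hD h

lemma oplus_subset_of_mem {D : Finset (V × V)} {e : V × V} (heD : e ∈ D) :
    oplus D e ⊆ D := by
  intro x hx
  rw [oplus, Finset.mem_sdiff, Finset.mem_insert] at hx
  rcases hx.1 with h | h
  · subst h; exact heD
  · exact h

lemma subset_oplus_of_not_mem {D : Finset (V × V)} {e : V × V} (h : drev e ∉ D) :
    D ⊆ oplus D e := by
  intro x hx
  rw [oplus, Finset.mem_sdiff, Finset.mem_insert, Finset.mem_singleton]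
  exact ⟨Or.inr hx, fun hc => h (hc ▸ hx)⟩

/-- a min-cost flow never uses both an edge and its reversal -/
lemma not_both_of_mincost (hw : ∀ e ∈ E, 0 < w e) {D S : Finset (V × V)}
    {e : V × V} (he : e ∈ E) (hre : drev e ∈ E) (hne : e ≠ drev e)
    (hmc : IsMinCostFlow E D d w (ind S)) : ¬ (e ∈ S ∧ drev e ∈ S) := by
  rintro ⟨h1, h2⟩
  set h : V × V → ℝ :=
    fun x => 1 * ind S x + (-1) * ind {e} x + (-1) * ind {drev e} x with hh
  have hSe : ind S e = 1 := by simp [ind, h1]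
  have hSre : ind S (drev e) = 1 := by simp [ind, h2]
  have hne' : drev e ≠ e := fun hc => hne hc.symm
  have hflow : IsFlow E D d h := by
    refine ⟨?_, ?_, ?_⟩
    · intro x hx
      have hb := hmc.1.1 x hx
      rw [hh]
      by_cases hxe : x = e
      · subst hxe
        simp [ind, h1, hne]
      · by_cases hxre : x = drev e
        · subst hxre
          simp [ind, h2, hne']
        · simp only [ind, Finset.mem_singleton, if_neg hxe, if_neg hxre]
          simp only [ind] at hb
          constructor
          · linarith [hb.1]
          · linarith [hb.2]
    · intro x hx
      have h0 : ind S x = 0 := hmc.1.2.1 x hx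
      have hxe : x ≠ e := fun hc => hx (hc ▸ mem_of_ind_flow hmc.1 h1)
      have hxre : x ≠ drev e := fun hc => hx (hc ▸ mem_of_ind_flow hmc.1 h2)
      simp only [ind] at h0
      simp only [hh, ind, Finset.mem_singleton, if_neg hxe, if_neg hxre, h0]
      ring
    · intro u
      have : fdiv E h u = d u := by
        rw [hh, fdiv_comb3, hmc.1.fdiv_eq, fdiv_ind_single E he, fdiv_ind_single E hre]
        have h1' : (drev e).1 = e.2 := rfl
        have h2' : (drev e).2 = e.1 := rfl
        rw [h1', h2']
        ring
      exact this
  have hcost : flowCost E w h = flowCost E w (ind S) - w e - w (drev e) := by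
    rw [hh, cost_comb3, cost_ind_single E w he, cost_ind_single E w hre]
    ring
  have hle := hmc.2 h hflow
  have hwe := hw e he
  have hwre := hw (drev e) hre
  rw [hcost] at hle
  linarith

lemma A_eq_of_mincost (hA : GoodA E d w A) {D D' : Finset (V × V)} (hD' : D' ⊆ E)
    (hadm : AdmitsFlow E D' d) (hmc : IsMinCostFlow E D' d w (ind (A D))) :
    A D' = A D :=
  (ind_inj ((hA D' hD' hadm).2 _ hmc)).symm

lemma atLeastOne (hw : ∀ e ∈ E, 0 < w e) (hA : GoodA E d w A)
    {e : V × V} (he : e ∈ E) (hre : drev e ∈ E) (hne : e ≠ drev e)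
    {D : Finset (V × V)} (hD : D ⊆ E) (hDf : AdmitsFlow E D d)
    (hpair : e ∈ D ↔ drev e ∈ D) :
    AEq E d A D (oplus D e) ∨ AEq E d A D (oplus D (drev e)) := by
  have hne' : drev e ≠ e := fun hc => hne hc.symm
  have hne2 : drev e ≠ drev (drev e) := by rw [drev_drev]; exact hne'
  have hADmc := (hA D hD hDf).1
  have hADflow := hADmc.1
  have hsub1 : oplus D e ⊆ E := oplus_subset he hD
  have hsub2 : oplus D (drev e) ⊆ E := oplus_subset hre hD
  by_cases heD : e ∈ D
  · -- both `e` and `drev e` lie in `D`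
    have hreD : drev e ∈ D := hpair.mp heD
    have hnb := not_both_of_mincost hw he hre hne hADmc
    have hout : drev e ∉ A D ∨ e ∉ A D := by tauto
    rcases hout with hout | hout
    · left
      have hfl : IsFlow E (oplus D e) d (ind (A D)) := by
        refine ⟨hADflow.1, ?_, hADflow.2.2⟩
        intro x hx
        by_cases hxx : x = drev e
        · subst hxx; simp [ind, hout]
        · by_cases hxe : x = e
          · subst hxe; exact absurd (mem_oplus_self hne) hx
          · exact hADflow.2.1 x (fun hxD => hx ((mem_oplus_iff hxe hxx).mpr hxD))
      have hmc : IsMinCostFlow E (oplus D e) d w (ind (A D)) :=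
        ⟨hfl, fun g hg => hADmc.2 g (isFlow_mono (oplus_subset_of_mem heD) hg)⟩
      have hadm : AdmitsFlow E (oplus D e) d := ⟨_, hfl⟩
      exact ⟨hDf, hadm, (A_eq_of_mincost hA hsub1 hadm hmc).symm⟩
    · right
      have hfl : IsFlow E (oplus D (drev e)) d (ind (A D)) := by
        refine ⟨hADflow.1, ?_, hADflow.2.2⟩
        intro x hx
        by_cases hxx : x = e
        · subst hxx; simp [ind, hout]
        · by_cases hxe : x = drev e
          · subst hxe; exact absurd (mem_oplus_self hne2) hx
          · refine hADflow.2.1 x (fun hxD => hx ((mem_oplus_iff hxe ?_).mpr hxD))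
            rw [drev_drev]; exact hxx
      have hmc : IsMinCostFlow E (oplus D (drev e)) d w (ind (A D)) :=
        ⟨hfl, fun g hg => hADmc.2 g (isFlow_mono (oplus_subset_of_mem hreD) hg)⟩
      have hadm : AdmitsFlow E (oplus D (drev e)) d := ⟨_, hfl⟩
      exact ⟨hDf, hadm, (A_eq_of_mincost hA hsub2 hadm hmc).symm⟩
  · -- neither `e` nor `drev e` lies in `D`
    have hreD : drev e ∉ D := fun hc => heD (hpair.mpr hc)
    have hDsub1 : D ⊆ oplus D e := subset_oplus_of_not_mem hreD
    have hDsub2 : D ⊆ oplus D (drev e) := subset_oplus_of_not_mem (by rw [drev_drev]; exact heD)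
    by_contra hno
    push_neg at hno
    obtain ⟨hn1, hn2⟩ := hno
    have hadm1 : AdmitsFlow E (oplus D e) d := ⟨_, isFlow_mono hDsub1 hADflow⟩
    have hadm2 : AdmitsFlow E (oplus D (drev e)) d := ⟨_, isFlow_mono hDsub2 hADflow⟩
    have hAne1 : A (oplus D e) ≠ A D := fun hc => hn1 ⟨hDf, hadm1, hc.symm⟩
    have hAne2 : A (oplus D (drev e)) ≠ A D := fun hc => hn2 ⟨hDf, hadm2, hc.symm⟩
    have hmc1 := (hA _ hsub1 hadm1).1
    have hmc2 := (hA _ hsub2 hadm2).1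
    have lt1 : flowCost E w (ind (A (oplus D e))) < flowCost E w (ind (A D)) := by
      rcases lt_or_eq_of_le (hmc1.2 _ (isFlow_mono hDsub1 hADflow)) with h | h
      · exact h
      · exfalso
        apply hAne1
        apply A_eq_of_mincost hA hsub1 hadm1
        exact ⟨isFlow_mono hDsub1 hADflow, fun g hg => by rw [← h]; exact hmc1.2 g hg⟩
    have lt2 : flowCost E w (ind (A (oplus D (drev e)))) < flowCost E w (ind (A D)) := by
      rcases lt_or_eq_of_le (hmc2.2 _ (isFlow_mono hDsub2 hADflow)) with h | h
      · exact h
      · exfalso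
        apply hAne2
        apply A_eq_of_mincost hA hsub2 hadm2
        exact ⟨isFlow_mono hDsub2 hADflow, fun g hg => by rw [← h]; exact hmc2.2 g hg⟩
    -- the min-cost flow on `D ⊕ e` uses `e`, that on `D ⊕ drev e` uses `drev e`
    have hfe : e ∈ A (oplus D e) := by
      by_contra hc
      have hfl : IsFlow E D d (ind (A (oplus D e))) := by
        refine ⟨hmc1.1.1, ?_, hmc1.1.2.2⟩
        intro x hx
        by_cases hxe : x = e
        · subst hxe; simp [ind, hc]
        · apply hmc1.1.2.1
          intro hmem
          have hxre : x ≠ drev e := by rintro rfl; exact drev_not_mem_oplus hmem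
          exact hx ((mem_oplus_iff hxe hxre).mp hmem)
      have := hADmc.2 _ hfl
      linarith
    have hgre : drev e ∈ A (oplus D (drev e)) := by
      by_contra hc
      have hfl : IsFlow E D d (ind (A (oplus D (drev e)))) := by
        refine ⟨hmc2.1.1, ?_, hmc2.1.2.2⟩
        intro x hx
        by_cases hxe : x = drev e
        · subst hxe; simp [ind, hc]
        · apply hmc2.1.2.1
          intro hmem
          have hxre : x ≠ drev (drev e) := by rintro rfl; exact drev_not_mem_oplus hmem
          exact hx ((mem_oplus_iff hxe hxre).mp hmem)
      have := hADmc.2 _ hfl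
      linarith
    have hfre : drev e ∉ A (oplus D e) := by
      intro hc
      have h0 := hmc1.1.2.1 (drev e) drev_not_mem_oplus
      simp [ind, hc] at h0
    have hge : e ∉ A (oplus D (drev e)) := by
      intro hc
      have hnm : drev (drev e) ∉ oplus D (drev e) := drev_not_mem_oplus
      rw [drev_drev] at hnm
      have h0 := hmc2.1.2.1 e hnm
      simp [ind, hc] at h0
    -- average the two flows and cancel the pair `e, drev e`
    set h : V × V → ℝ := fun x =>
      (1/2) * ind (A (oplus D e)) x + (1/2) * ind (A (oplus D (drev e))) x
        + (-(1/2)) * ind {e} x + (-(1/2)) * ind {drev e} x with hh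
    have hflow : IsFlow E D d h := by
      refine ⟨?_, ?_, ?_⟩
      · intro x hx
        rw [hh]
        by_cases hxe : x = e
        · subst hxe
          simp [ind, hfe, hge, hne]
        · by_cases hxre : x = drev e
          · subst hxre
            simp [ind, hgre, hfre, hne']
          · have hb1 := hmc1.1.1 x hx
            have hb2 := hmc2.1.1 x hx
            simp only [ind, Finset.mem_singleton, if_neg hxe, if_neg hxre] at *
            constructor
            · linarith [hb1.1, hb2.1]
            · linarith [hb1.2, hb2.2]
      · intro x hx
        rw [hh]
        by_cases hxe : x = e
        · subst hxe
          simp [ind, hfe, hge, hne]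
        · by_cases hxre : x = drev e
          · subst hxre
            simp [ind, hgre, hfre, hne']
          · have h1 : ind (A (oplus D e)) x = 0 := by
              apply hmc1.1.2.1
              intro hmem
              exact hx ((mem_oplus_iff hxe hxre).mp hmem)
            have h2 : ind (A (oplus D (drev e))) x = 0 := by
              apply hmc2.1.2.1
              intro hmem
              have hxre2 : x ≠ drev (drev e) := by rw [drev_drev]; exact hxe
              exact hx ((mem_oplus_iff hxre hxre2).mp hmem)
            simp only [ind, Finset.mem_singleton, if_neg hxe, if_neg hxre] at *
            rw [h1, h2]
            ring
      · intro u
        have : fdiv E h u = d u := by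
          rw [hh, fdiv_comb4, hmc1.1.fdiv_eq, hmc2.1.fdiv_eq,
            fdiv_ind_single E he, fdiv_ind_single E hre]
          have h1' : (drev e).1 = e.2 := rfl
          have h2' : (drev e).2 = e.1 := rfl
          rw [h1', h2']
          ring
        exact this
    have hcost : flowCost E w h
        = (1/2) * flowCost E w (ind (A (oplus D e)))
          + (1/2) * flowCost E w (ind (A (oplus D (drev e))))
          + (-(1/2)) * w e + (-(1/2)) * w (drev e) := by
      rw [hh, cost_comb4, cost_ind_single E w he, cost_ind_single E w hre]
    have hle := hADmc.2 h hflow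
    have hwe := hw e he
    have hwre := hw (drev e) hre
    rw [hcost] at hle
    linarith

lemma phi_step (hw : ∀ e ∈ E, 0 < w e) (hA : GoodA E d w A) (E' : Finset (V × V))
    {e : V × V} (he : e ∈ E) (hre : drev e ∈ E) (hne : e ≠ drev e)
    {D : Finset (V × V)} (hD : D ⊆ E) (hDf : AdmitsFlow E D d)
    (hpair : e ∈ D ↔ drev e ∈ D) :
    ∃ e', (e' = e ∨ e' = drev e) ∧ phiE E d A E' e D = oplus D e' ∧
      AEq E d A D (oplus D e') := by
  have halt := atLeastOne hw hA he hre hne hD hDf hpair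
  by_cases h1 : AEq E d A D (oplus D e)
  · by_cases h2 : AEq E d A D (oplus D (drev e))
    · have hphi : phiE E d A E' e D
          = if e ∈ D then oplus D (chi E' e) else oplus D (drev (chi E' e)) := by
        unfold phiE
        rw [if_neg (not_not_intro h1), if_neg (not_not_intro h2)]
      by_cases h3 : e ∈ D
      · rw [hphi, if_pos h3]
        by_cases hE'e : e ∈ E'
        · rw [chi, if_pos hE'e]
          exact ⟨e, Or.inl rfl, rfl, h1⟩
        · rw [chi, if_neg hE'e]
          exact ⟨drev e, Or.inr rfl, rfl, h2⟩
      · rw [hphi, if_neg h3]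
        by_cases hE'e : e ∈ E'
        · rw [chi, if_pos hE'e]
          exact ⟨drev e, Or.inr rfl, rfl, h2⟩
        · rw [chi, if_neg hE'e, drev_drev]
          exact ⟨e, Or.inl rfl, rfl, h1⟩
    · have hphi : phiE E d A E' e D = oplus D e := by
        unfold phiE
        rw [if_neg (not_not_intro h1), if_pos h2]
      exact ⟨e, Or.inl rfl, hphi, h1⟩
  · have h2 : AEq E d A D (oplus D (drev e)) := halt.resolve_left h1
    have hphi : phiE E d A E' e D = oplus D (drev e) := by
      unfold phiE
      rw [if_pos h1]
    exact ⟨drev e, Or.inr rfl, hphi, h2⟩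

lemma fold_lemma (hE_symm : ∀ e, e ∈ E ↔ drev e ∈ E) (hE_ne : ∀ e ∈ E, e.1 ≠ e.2)
    (hw : ∀ e ∈ E, 0 < w e) (hA : GoodA E d w A)
    {E' : Finset (V × V)} (hE' : IsOrientation E E') (l : List (V × V)) :
    ∀ D : Finset (V × V), l.Nodup → (∀ e ∈ l, e ∈ E') → D ⊆ E → AdmitsFlow E D d →
      (∀ e ∈ l, (e ∈ D ↔ drev e ∈ D)) →
      (l.foldl (fun D e => phiE E d A E' e D) D) ⊆ E ∧
      AdmitsFlow E (l.foldl (fun D e => phiE E d A E' e D) D) d ∧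
      A (l.foldl (fun D e => phiE E d A E' e D) D) = A D ∧
      (∀ e ∈ l, (e ∈ l.foldl (fun D e => phiE E d A E' e D) D ↔
          drev e ∉ l.foldl (fun D e => phiE E d A E' e D) D)) ∧
      (∀ x : V × V, x ∉ l → drev x ∉ l →
          ((x ∈ l.foldl (fun D e => phiE E d A E' e D) D) ↔ x ∈ D)) := by
  induction l with
  | nil =>
    intro D _ _ hD hDf _
    refine ⟨by simpa using hD, by simpa using hDf, by simp, by simp, by simp⟩
  | cons e t ih =>
    intro D hnd hmem hD hDf hpair
    have hnd' := List.nodup_cons.mp hnd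
    have he' : e ∈ E' := hmem e List.mem_cons_self
    have he : e ∈ E := hE'.1 he'
    have hne1 : e.1 ≠ e.2 := hE_ne e he
    have hne : e ≠ drev e := ne_drev_self hne1
    have hne'' : drev e ≠ e := fun hc => hne hc.symm
    have hne2 : drev e ≠ drev (drev e) := by rw [drev_drev]; exact hne''
    have hre : drev e ∈ E := (hE_symm e).mp he
    have hdreE' : drev e ∉ E' := (hE'.2 e he).mp he'
    obtain ⟨e', he'c, hphi, hAEq⟩ :=
      phi_step hw hA E' he hre hne hD hDf (hpair e List.mem_cons_self)
    have he'E : e' ∈ E := by rcases he'c with rfl | rfl; exacts [he, hre]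
    have hD1sub : oplus D e' ⊆ E := oplus_subset he'E hD
    have hadm1 : AdmitsFlow E (oplus D e') d := hAEq.2.1
    have hA1 : A (oplus D e') = A D := hAEq.2.2.symm
    have hpair1 : e ∈ oplus D e' ↔ drev e ∉ oplus D e' := by
      rcases he'c with rfl | rfl
      · simp [mem_oplus_self hne, drev_not_mem_oplus]
      · have h1 : e ∉ oplus D (drev e) := by
          have := drev_not_mem_oplus (D := D) (e := drev e)
          rwa [drev_drev] at this
        simp [h1, mem_oplus_self hne2]
    have hunch1 : ∀ x : V × V, x ≠ e → x ≠ drev e → (x ∈ oplus D e' ↔ x ∈ D) := by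
      intro x hx1 hx2
      rcases he'c with rfl | rfl
      · exact mem_oplus_iff hx1 hx2
      · refine mem_oplus_iff hx2 ?_
        rw [drev_drev]; exact hx1
    have hpair_t : ∀ x ∈ t, (x ∈ oplus D e' ↔ drev x ∈ oplus D e') := by
      intro x hx
      have hxE' : x ∈ E' := hmem x (List.mem_cons_of_mem _ hx)
      have hx1 : x ≠ e := fun hc => hnd'.1 (hc ▸ hx)
      have hx2 : x ≠ drev e := fun hc => hdreE' (hc ▸ hxE')
      have hx3 : drev x ≠ e := fun hc => hx2 (by rw [← hc, drev_drev])
      have hx4 : drev x ≠ drev e := fun hc => hx1 (by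
        have := congrArg drev hc
        rwa [drev_drev, drev_drev] at this)
      rw [hunch1 x hx1 hx2, hunch1 (drev x) hx3 hx4]
      exact hpair x (List.mem_cons_of_mem _ hx)
    obtain ⟨hs, hadm, hAe, hor, hunch⟩ :=
      ih (oplus D e') hnd'.2 (fun x hx => hmem x (List.mem_cons_of_mem _ hx))
        hD1sub hadm1 hpair_t
    have hfoldl : (e :: t).foldl (fun D e => phiE E d A E' e D) D
        = t.foldl (fun D e => phiE E d A E' e D) (oplus D e') := by
      rw [List.foldl_cons, hphi]
    rw [hfoldl]
    refine ⟨hs, hadm, hAe.trans hA1, ?_, ?_⟩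
    · intro x hx
      rcases List.mem_cons.mp hx with rfl | hxt
      · have hxnt : x ∉ t := hnd'.1
        have hdxnt : drev x ∉ t := fun hc => hdreE' (hmem _ (List.mem_cons_of_mem _ hc))
        have hddx : drev (drev x) ∉ t := by rwa [drev_drev]
        rw [hunch x hxnt hdxnt, hunch (drev x) hdxnt hddx]
        exact hpair1
      · exact hor x hxt
    · intro x hx hdx
      have hx1 : x ≠ e := fun hc => hx (hc ▸ (List.mem_cons_self (a := e) (l := t)))
      have hx2 : x ∉ t := fun hc => hx (List.mem_cons_of_mem _ hc)
      have hdx1 : drev x ≠ e := fun hc => hdx (hc ▸ (List.mem_cons_self (a := e) (l := t)))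
      have hdx2 : drev x ∉ t := fun hc => hdx (List.mem_cons_of_mem _ hc)
      have hx3 : x ≠ drev e := fun hc => hdx1 (by rw [hc, drev_drev])
      rw [hunch x hx2 hdx2]
      exact hunch1 x hx1 hx3

end Aux

theorem phi_maps_subgraphs_to_orientations
    {V : Type*} [Fintype V] [DecidableEq V]
    (E : Finset (V × V)) (hE_symm : ∀ e, e ∈ E ↔ drev e ∈ E)
    (hE_ne : ∀ e ∈ E, e.1 ≠ e.2)
    (d : V → ℤ) (hd : ∑ u : V, d u = 0)
    (w : V × V → ℝ) (hw : ∀ e ∈ E, 0 < w e)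
    (A : Finset (V × V) → Finset (V × V)) (hA : GoodA E d w A)
    (E' : Finset (V × V)) (hE' : IsOrientation E E')
    (l : List (V × V)) (hl_nd : l.Nodup) (hl : l.toFinset = E')
    (K : Finset (V × V)) (hK : IsSubgraph E K) (hKf : AdmitsFlow E K d) :
    IsOrientation E (l.foldl (fun D e => phiE E d A E' e D) K) ∧
    AdmitsFlow E (l.foldl (fun D e => phiE E d A E' e D) K) d ∧
    A (l.foldl (fun D e => phiE E d A E' e D) K) = A K := by
  have hmem : ∀ e ∈ l, e ∈ E' := fun e hel => hl ▸ List.mem_toFinset.mpr hel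
  obtain ⟨hs, hadm, hAe, hor, hunch⟩ :=
    fold_lemma hE_symm hE_ne hw hA hE' l K hl_nd hmem hK.1 hKf
      (fun e hel => hK.2 e (hE'.1 (hmem e hel)))
  refine ⟨⟨hs, ?_⟩, hadm, hAe⟩
  intro x hx
  by_cases hx' : x ∈ E'
  · exact hor x (by rw [← hl] at hx'; exact List.mem_toFinset.mp hx')
  · have hdx' : drev x ∈ E' := by
      have := hE'.2 x hx
      tauto
    have h2 := hor (drev x) (by rw [← hl] at hdx'; exact List.mem_toFinset.mp hdx')
    rw [drev_drev] at h2
    tauto
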